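/- For any vector β of norm 2 in the dual lattice of A_4^∨(5), the lattice A_4^∨(5) + ℤβ is isomorphic to the root lattice A_4: for every b ∈ A_4 with ⟨b,b⟩ = 10 and β = b/5, there exists an additive group isomorphism φ from L = A_4^∨ + ℤβ onto A_4 such that ⟨φ(x), φ(y)⟩ = 5⟨x,y⟩ for all x, y ∈ L. -/

import Mathlib

open scoped BigOperators

noncomputable section

/-- The standard bilinear form `⟨x,y⟩ = ∑ xᵢ yᵢ` on `ℚ^5`. -/
def form (x y : Fin 5 → ℚ) : ℚ := ∑ i, x i * y i

/-- The root lattice `A₄ = {a ∈ ℤ^5 : a₁ + ⋯ + a₅ = 0}` inside `ℚ^5`. -/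
def A4 : AddSubgroup (Fin 5 → ℚ) where
  carrier := {a | (∀ i, ∃ n : ℤ, a i = (n : ℚ)) ∧ ∑ i, a i = 0}
  zero_mem' := ⟨fun _ => ⟨0, by simp⟩, by simp⟩
  add_mem' := by
    rintro a b ⟨ha, ha0⟩ ⟨hb, hb0⟩
    constructor
    · intro i
      obtain ⟨n, hn⟩ := ha i
      obtain ⟨m, hm⟩ := hb i
      exact ⟨n + m, by push_cast [Pi.add_apply, hn, hm]; ring⟩
    · simp [Pi.add_apply, Finset.sum_add_distrib, ha0, hb0]
  neg_mem' := by
    rintro a ⟨ha, ha0⟩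
    constructor
    · intro i
      obtain ⟨n, hn⟩ := ha i
      exact ⟨-n, by push_cast [Pi.neg_apply, hn]; ring⟩
    · simp [Pi.neg_apply, Finset.sum_neg_distrib, ha0]

/-- The fundamental weight `w₁ = (4,-1,-1,-1,-1)/5` of `A₄`. -/
def w1 : Fin 5 → ℚ := ![4/5, -1/5, -1/5, -1/5, -1/5]
/-- The fundamental weight `w₂ = (3,3,-2,-2,-2)/5` of `A₄`. -/
def w2 : Fin 5 → ℚ := ![3/5, 3/5, -2/5, -2/5, -2/5]
/-- The fundamental weight `w₃ = (2,2,2,-3,-3)/5` of `A₄`. -/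
def w3 : Fin 5 → ℚ := ![2/5, 2/5, 2/5, -3/5, -3/5]
/-- The fundamental weight `w₄ = (1,1,1,1,-4)/5` of `A₄`. -/
def w4 : Fin 5 → ℚ := ![1/5, 1/5, 1/5, 1/5, -4/5]

/-- The weight lattice `A₄^∨ = ℤw₁ + ℤw₂ + ℤw₃ + ℤw₄`.  The rescaled lattice `A₄^∨(5)`
is this group equipped with the bilinear form `5⟨·,·⟩`. -/
def A4dual : AddSubgroup (Fin 5 → ℚ) := AddSubgroup.closure {w1, w2, w3, w4}

/-- The dual lattice `(1/5)A₄ = {a/5 : a ∈ A₄}` of `A₄^∨(5)`. -/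
def fifthA4 : AddSubgroup (Fin 5 → ℚ) :=
  A4.map (DistribMulAction.toAddMonoidHom (Fin 5 → ℚ) ((5 : ℚ)⁻¹))

/-- The hyperplane `V = {x ∈ ℚ^5 : x₁ + ⋯ + x₅ = 0}`. -/
def V0 : Submodule ℚ (Fin 5 → ℚ) where
  carrier := {x | ∑ i, x i = 0}
  zero_mem' := by simp
  add_mem' := by
    intro a b ha hb
    simp only [Set.mem_setOf_eq] at *
    simp [Pi.add_apply, Finset.sum_add_distrib, ha, hb]
  smul_mem' := by
    intro c a ha
    simp only [Set.mem_setOf_eq] at *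
    simp [Pi.smul_apply, ← Finset.mul_sum, ha]

/-- The discriminant group `D = ((1/5)A₄)/A₄^∨` of the lattice `A₄^∨(5)`. -/
abbrev Disc := fifthA4 ⧸ (A4dual.addSubgroupOf fifthA4)

/-! ### Auxiliary material -/

/-- The explicit similitude `T₀` of ratio `√5` (its matrix `T` satisfies `TᵀT = 5I - J`). -/
def Tfun (x : Fin 5 → ℚ) : Fin 5 → ℚ :=
  ![ -x 0 + x 2 - x 3 + x 4,
     -x 1 - x 2 + x 3 + x 4,
     x 0 + x 1 - x 2 - x 3,
     -x 0 + x 1 + x 3 - x 4,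
     x 0 - x 1 + x 2 - x 4 ]

/-- `S₀ = T₀ᵀ/5`, the inverse of `T₀` on the hyperplane `V₀`. -/
def Sfun (x : Fin 5 → ℚ) : Fin 5 → ℚ :=
  ![ (-x 0 + x 2 - x 3 + x 4)/5,
     (-x 1 + x 2 + x 3 - x 4)/5,
     (x 0 - x 1 - x 2 + x 4)/5,
     (-x 0 + x 1 - x 2 + x 3)/5,
     (x 0 + x 1 - x 3 - x 4)/5 ]

def Thom : (Fin 5 → ℚ) →+ (Fin 5 → ℚ) where
  toFun := Tfun
  map_zero' := by funext i; fin_cases i <;> simp [Tfun]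
  map_add' x y := by funext i; fin_cases i <;> (simp [Tfun]; ring)

def Shom : (Fin 5 → ℚ) →+ (Fin 5 → ℚ) where
  toFun := Sfun
  map_zero' := by funext i; fin_cases i <;> simp [Sfun]
  map_add' x y := by funext i; fin_cases i <;> (simp [Sfun]; ring)

def Phom (σ : Equiv.Perm (Fin 5)) : (Fin 5 → ℚ) →+ (Fin 5 → ℚ) where
  toFun x := fun i => x (σ i)
  map_zero' := rfl
  map_add' _ _ := rfl

def b0q : Fin 5 → ℚ := ![2, -2, 1, -1, 0]
def beta0 : Fin 5 → ℚ := ![2/5, -2/5, 1/5, -1/5, 0]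
def rho1 : Fin 5 → ℚ := ![1, -1, 0, 0, 0]
def rho2 : Fin 5 → ℚ := ![0, 1, -1, 0, 0]
def rho3 : Fin 5 → ℚ := ![0, 0, 1, -1, 0]
def rho4 : Fin 5 → ℚ := ![0, 0, 0, 1, -1]

lemma memA4_int (m : Fin 5 → ℤ) (h : m 0 + m 1 + m 2 + m 3 + m 4 = 0) :
    (fun i => (m i : ℚ)) ∈ A4 :=
  ⟨fun i => ⟨m i, rfl⟩, by rw [Fin.sum_univ_five]; exact_mod_cast h⟩

lemma hw1mem : w1 ∈ A4dual := AddSubgroup.subset_closure (by simp)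
lemma hw2mem : w2 ∈ A4dual := AddSubgroup.subset_closure (by simp)
lemma hw3mem : w3 ∈ A4dual := AddSubgroup.subset_closure (by simp)
lemma hw4mem : w4 ∈ A4dual := AddSubgroup.subset_closure (by simp)

lemma rho1_mem : rho1 ∈ A4dual := by
  have h : rho1 = w1 + w1 - w2 := by
    funext i; fin_cases i <;> norm_num [rho1, w1, w2]
  rw [h]; exact sub_mem (add_mem hw1mem hw1mem) hw2mem

lemma rho2_mem : rho2 ∈ A4dual := by
  have h : rho2 = w2 + w2 - w1 - w3 := by
    funext i; fin_cases i <;> norm_num [rho2, w1, w2, w3]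
  rw [h]; exact sub_mem (sub_mem (add_mem hw2mem hw2mem) hw1mem) hw3mem

lemma rho3_mem : rho3 ∈ A4dual := by
  have h : rho3 = w3 + w3 - w2 - w4 := by
    funext i; fin_cases i <;> norm_num [rho3, w2, w3, w4]
  rw [h]; exact sub_mem (sub_mem (add_mem hw3mem hw3mem) hw2mem) hw4mem

lemma rho4_mem : rho4 ∈ A4dual := by
  have h : rho4 = w4 + w4 - w3 := by
    funext i; fin_cases i <;> norm_num [rho4, w3, w4]
  rw [h]; exact sub_mem (add_mem hw4mem hw4mem) hw3mem

lemma A4_le_roots (H : AddSubgroup (Fin 5 → ℚ)) (h1 : rho1 ∈ H) (h2 : rho2 ∈ H)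
    (h3 : rho3 ∈ H) (h4 : rho4 ∈ H) : A4 ≤ H := by
  intro a ha
  obtain ⟨hint, hsum⟩ := ha
  choose n hn using hint
  have h5 : (n 0 : ℚ) + n 1 + n 2 + n 3 + n 4 = 0 := by
    rw [Fin.sum_univ_five, hn 0, hn 1, hn 2, hn 3, hn 4] at hsum; exact hsum
  have key : a = n 0 • rho1 + (n 0 + n 1) • rho2 + (n 0 + n 1 + n 2) • rho3
      + (n 0 + n 1 + n 2 + n 3) • rho4 := by
    funext i
    fin_cases i <;>
      (simp only [Pi.add_apply, Pi.smul_apply, zsmul_eq_mul, rho1, rho2, rho3, rho4, hn] <;>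
        push_cast <;> simp <;> linarith [h5])
  rw [key]
  exact add_mem (add_mem (add_mem (zsmul_mem h1 _) (zsmul_mem h2 _)) (zsmul_mem h3 _))
    (zsmul_mem h4 _)

lemma A4_le_dual : A4 ≤ A4dual :=
  A4_le_roots _ rho1_mem rho2_mem rho3_mem rho4_mem

lemma perm_dual_aux (w : Fin 5 → ℚ) (c : ℚ) (hent : ∀ i, ∃ n : ℤ, w i = (n : ℚ) - c)
    (hw : w ∈ A4dual) (σ : Equiv.Perm (Fin 5)) : (fun i => w (σ i)) ∈ A4dual := by
  have hdiff : (fun i => w (σ i) - w i) ∈ A4 := by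
    refine ⟨fun i => ?_, ?_⟩
    · obtain ⟨n, hn⟩ := hent (σ i); obtain ⟨m, hm⟩ := hent i
      refine ⟨n - m, ?_⟩
      show w (σ i) - w i = ((n - m : ℤ) : ℚ)
      rw [hn, hm]; push_cast; ring
    · rw [Finset.sum_sub_distrib, Equiv.sum_comp σ w, sub_self]
  have heq : (fun i => w (σ i)) = w + fun i => w (σ i) - w i := by funext i; simp
  rw [heq]; exact add_mem hw (A4_le_dual hdiff)

lemma wEnt1 : ∀ i, ∃ n : ℤ, w1 i = (n : ℚ) - 1/5 := by
  intro i; fin_cases i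
  exacts [⟨1, by norm_num [w1]⟩, ⟨0, by norm_num [w1]⟩, ⟨0, by norm_num [w1]⟩,
    ⟨0, by norm_num [w1]⟩, ⟨0, by norm_num [w1]⟩]

lemma wEnt2 : ∀ i, ∃ n : ℤ, w2 i = (n : ℚ) - 2/5 := by
  intro i; fin_cases i
  exacts [⟨1, by norm_num [w2]⟩, ⟨1, by norm_num [w2]⟩, ⟨0, by norm_num [w2]⟩,
    ⟨0, by norm_num [w2]⟩, ⟨0, by norm_num [w2]⟩]

lemma wEnt3 : ∀ i, ∃ n : ℤ, w3 i = (n : ℚ) - 3/5 := by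
  intro i; fin_cases i
  exacts [⟨1, by norm_num [w3]⟩, ⟨1, by norm_num [w3]⟩, ⟨1, by norm_num [w3]⟩,
    ⟨0, by norm_num [w3]⟩, ⟨0, by norm_num [w3]⟩]

lemma wEnt4 : ∀ i, ∃ n : ℤ, w4 i = (n : ℚ) - 4/5 := by
  intro i; fin_cases i
  exacts [⟨1, by norm_num [w4]⟩, ⟨1, by norm_num [w4]⟩, ⟨1, by norm_num [w4]⟩,
    ⟨1, by norm_num [w4]⟩, ⟨0, by norm_num [w4]⟩]

lemma perm_dual (σ : Equiv.Perm (Fin 5)) : ∀ x ∈ A4dual, (fun i => x (σ i)) ∈ A4dual := by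
  intro x hx
  have hle : AddSubgroup.closure {w1, w2, w3, w4} ≤ AddSubgroup.comap (Phom σ) A4dual := by
    rw [AddSubgroup.closure_le]
    rintro g hg
    simp only [Set.mem_insert_iff, Set.mem_singleton_iff] at hg
    rcases hg with rfl | rfl | rfl | rfl
    · exact perm_dual_aux w1 (1/5) wEnt1 hw1mem σ
    · exact perm_dual_aux w2 (2/5) wEnt2 hw2mem σ
    · exact perm_dual_aux w3 (3/5) wEnt3 hw3mem σ
    · exact perm_dual_aux w4 (4/5) wEnt4 hw4mem σ
  exact hle hx

lemma Tw1 : Tfun w1 ∈ A4 := by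
  have h : Tfun w1 = fun i => ((![-1, 0, 1, -1, 1] : Fin 5 → ℤ) i : ℚ) := by
    funext i; fin_cases i <;> (simp [Tfun, w1] <;> norm_num)
  rw [h]; exact memA4_int _ (by simp)

lemma Tw2 : Tfun w2 ∈ A4 := by
  have h : Tfun w2 = fun i => ((![-1, -1, 2, 0, 0] : Fin 5 → ℤ) i : ℚ) := by
    funext i; fin_cases i <;> (simp [Tfun, w2] <;> norm_num)
  rw [h]; exact memA4_int _ (by simp)

lemma Tw3 : Tfun w3 ∈ A4 := by
  have h : Tfun w3 = fun i => ((![0, -2, 1, 0, 1] : Fin 5 → ℤ) i : ℚ) := by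
    funext i; fin_cases i <;> (simp [Tfun, w3] <;> norm_num)
  rw [h]; exact memA4_int _ (by simp)

lemma Tw4 : Tfun w4 ∈ A4 := by
  have h : Tfun w4 = fun i => ((![-1, -1, 0, 1, 1] : Fin 5 → ℤ) i : ℚ) := by
    funext i; fin_cases i <;> (simp [Tfun, w4] <;> norm_num)
  rw [h]; exact memA4_int _ (by simp)

lemma Tbeta0 : Tfun beta0 ∈ A4 := by
  have h : Tfun beta0 = fun i => ((![0, 0, 0, -1, 1] : Fin 5 → ℤ) i : ℚ) := by
    funext i; fin_cases i <;> (simp [Tfun, beta0] <;> norm_num)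
  rw [h]; exact memA4_int _ (by simp)

lemma Tdual : ∀ x ∈ A4dual, Tfun x ∈ A4 := by
  intro x hx
  have hle : AddSubgroup.closure {w1, w2, w3, w4} ≤ AddSubgroup.comap Thom A4 := by
    rw [AddSubgroup.closure_le]
    rintro g hg
    simp only [Set.mem_insert_iff, Set.mem_singleton_iff] at hg
    rcases hg with rfl | rfl | rfl | rfl
    exacts [Tw1, Tw2, Tw3, Tw4]
  exact hle hx

lemma dual_sum_zero : ∀ x ∈ A4dual, ∑ i, x i = 0 := by
  intro x hx
  have hle : AddSubgroup.closure {w1, w2, w3, w4} ≤ V0.toAddSubgroup := by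
    rw [AddSubgroup.closure_le]
    rintro g hg
    simp only [Set.mem_insert_iff, Set.mem_singleton_iff] at hg
    rcases hg with rfl | rfl | rfl | rfl
    · show ∑ i, w1 i = 0; simp [w1, Fin.sum_univ_five] <;> norm_num
    · show ∑ i, w2 i = 0; simp [w2, Fin.sum_univ_five] <;> norm_num
    · show ∑ i, w3 i = 0; simp [w3, Fin.sum_univ_five] <;> norm_num
    · show ∑ i, w4 i = 0; simp [w4, Fin.sum_univ_five] <;> norm_num
  exact hle hx

lemma ST_id (x : Fin 5 → ℚ) (h : ∑ i, x i = 0) : Sfun (Tfun x) = x := by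
  rw [Fin.sum_univ_five] at h
  funext i; fin_cases i <;> (simp [Sfun, Tfun]; ring_nf; linarith)

lemma TS_id (x : Fin 5 → ℚ) (h : ∑ i, x i = 0) : Tfun (Sfun x) = x := by
  rw [Fin.sum_univ_five] at h
  funext i; fin_cases i <;> (simp [Sfun, Tfun]; ring_nf; linarith)

lemma form_T (x y : Fin 5 → ℚ) :
    form (Tfun x) (Tfun y) = 5 * form x y - (∑ i, x i) * (∑ i, y i) := by
  simp [form, Tfun, Fin.sum_univ_five]; ring

def g0 : Fin 5 → Fin 5 := ![4, 0, 3, 1, 2]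

set_option maxRecDepth 10000 in
lemma keyClassify : ∀ a b c d e : Fin 5,
    ((a : ℕ) + (b : ℕ) + (c : ℕ) + (d : ℕ) + (e : ℕ) = 10 ∧
     (a : ℕ)^2 + (b : ℕ)^2 + (c : ℕ)^2 + (d : ℕ)^2 + (e : ℕ)^2 = 30) →
    ∃ σ : Equiv.Perm (Fin 5), a = g0 (σ 0) ∧ b = g0 (σ 1) ∧ c = g0 (σ 2) ∧ d = g0 (σ 3)
      ∧ e = g0 (σ 4) := by
  decide

lemma intbound (m : ℤ) (h : m * m ≤ 8) : -2 ≤ m ∧ m ≤ 2 := by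
  constructor <;> nlinarith

set_option maxHeartbeats 800000 in
lemma classify (b : Fin 5 → ℚ) (hb : b ∈ A4) (hf : form b b = 10) :
    ∃ σ : Equiv.Perm (Fin 5), ∀ i, b i = b0q (σ i) := by
  obtain ⟨hint, hsum⟩ := hb
  choose n hn using hint
  have hsZ : n 0 + n 1 + n 2 + n 3 + n 4 = 0 := by
    rw [Fin.sum_univ_five, hn 0, hn 1, hn 2, hn 3, hn 4] at hsum
    exact_mod_cast hsum
  have hqZ : n 0 * n 0 + n 1 * n 1 + n 2 * n 2 + n 3 * n 3 + n 4 * n 4 = 10 := by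
    unfold form at hf
    rw [Fin.sum_univ_five, hn 0, hn 1, hn 2, hn 3, hn 4] at hf
    exact_mod_cast hf
  have hb0 : -2 ≤ n 0 ∧ n 0 ≤ 2 := by
    have e2 : (n 1 + n 2 + n 3 + n 4) * (n 1 + n 2 + n 3 + n 4) = n 0 * n 0 := by
      have e : n 1 + n 2 + n 3 + n 4 = -n 0 := by linarith [hsZ]
      rw [e]; ring
    refine intbound _ ?_
    linarith [hqZ, e2, sq_nonneg (n 1 - n 2), sq_nonneg (n 1 - n 3), sq_nonneg (n 1 - n 4),
      sq_nonneg (n 2 - n 3), sq_nonneg (n 2 - n 4), sq_nonneg (n 3 - n 4)]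
  have hb1 : -2 ≤ n 1 ∧ n 1 ≤ 2 := by
    have e2 : (n 0 + n 2 + n 3 + n 4) * (n 0 + n 2 + n 3 + n 4) = n 1 * n 1 := by
      have e : n 0 + n 2 + n 3 + n 4 = -n 1 := by linarith [hsZ]
      rw [e]; ring
    refine intbound _ ?_
    linarith [hqZ, e2, sq_nonneg (n 0 - n 2), sq_nonneg (n 0 - n 3), sq_nonneg (n 0 - n 4),
      sq_nonneg (n 2 - n 3), sq_nonneg (n 2 - n 4), sq_nonneg (n 3 - n 4)]
  have hb2 : -2 ≤ n 2 ∧ n 2 ≤ 2 := by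
    have e2 : (n 0 + n 1 + n 3 + n 4) * (n 0 + n 1 + n 3 + n 4) = n 2 * n 2 := by
      have e : n 0 + n 1 + n 3 + n 4 = -n 2 := by linarith [hsZ]
      rw [e]; ring
    refine intbound _ ?_
    linarith [hqZ, e2, sq_nonneg (n 0 - n 1), sq_nonneg (n 0 - n 3), sq_nonneg (n 0 - n 4),
      sq_nonneg (n 1 - n 3), sq_nonneg (n 1 - n 4), sq_nonneg (n 3 - n 4)]
  have hb3 : -2 ≤ n 3 ∧ n 3 ≤ 2 := by
    have e2 : (n 0 + n 1 + n 2 + n 4) * (n 0 + n 1 + n 2 + n 4) = n 3 * n 3 := by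
      have e : n 0 + n 1 + n 2 + n 4 = -n 3 := by linarith [hsZ]
      rw [e]; ring
    refine intbound _ ?_
    linarith [hqZ, e2, sq_nonneg (n 0 - n 1), sq_nonneg (n 0 - n 2), sq_nonneg (n 0 - n 4),
      sq_nonneg (n 1 - n 2), sq_nonneg (n 1 - n 4), sq_nonneg (n 2 - n 4)]
  have hb4 : -2 ≤ n 4 ∧ n 4 ≤ 2 := by
    have e2 : (n 0 + n 1 + n 2 + n 3) * (n 0 + n 1 + n 2 + n 3) = n 4 * n 4 := by
      have e : n 0 + n 1 + n 2 + n 3 = -n 4 := by linarith [hsZ]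
      rw [e]; ring
    refine intbound _ ?_
    linarith [hqZ, e2, sq_nonneg (n 0 - n 1), sq_nonneg (n 0 - n 2), sq_nonneg (n 0 - n 3),
      sq_nonneg (n 1 - n 2), sq_nonneg (n 1 - n 3), sq_nonneg (n 2 - n 3)]
  have hbd : ∀ i, -2 ≤ n i ∧ n i ≤ 2 := by
    intro i; fin_cases i
    exacts [hb0, hb1, hb2, hb3, hb4]
  have hf' : ∀ i : Fin 5, (n i + 2).toNat < 5 := by
    intro i; have := hbd i; omega
  set f : Fin 5 → Fin 5 := fun i => ⟨(n i + 2).toNat, hf' i⟩ with hfdef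
  have hfv : ∀ i, ((f i : ℕ) : ℤ) = n i + 2 := by
    intro i; have := hbd i; simp only [hfdef]; omega
  have hc1 : (f 0 : ℕ) + (f 1 : ℕ) + (f 2 : ℕ) + (f 3 : ℕ) + (f 4 : ℕ) = 10 := by
    have h0 := hfv 0; have h1 := hfv 1; have h2 := hfv 2; have h3 := hfv 3; have h4 := hfv 4
    omega
  have hc2 : (f 0 : ℕ)^2 + (f 1 : ℕ)^2 + (f 2 : ℕ)^2 + (f 3 : ℕ)^2 + (f 4 : ℕ)^2 = 30 := by
    have : ((f 0 : ℕ)^2 + (f 1 : ℕ)^2 + (f 2 : ℕ)^2 + (f 3 : ℕ)^2 + (f 4 : ℕ)^2 : ℤ) = 30 := by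
      rw [hfv 0, hfv 1, hfv 2, hfv 3, hfv 4]
      linarith [hsZ, hqZ]
    exact_mod_cast this
  obtain ⟨σ, hσ0, hσ1, hσ2, hσ3, hσ4⟩ := keyClassify (f 0) (f 1) (f 2) (f 3) (f 4) ⟨hc1, hc2⟩
  refine ⟨σ, fun i => ?_⟩
  have hfi : f i = g0 (σ i) := by
    fin_cases i
    exacts [hσ0, hσ1, hσ2, hσ3, hσ4]
  have hni : n i = ((g0 (σ i) : ℕ) : ℤ) - 2 := by
    have := hfv i; rw [hfi] at this; omega
  have hg : ∀ j, ((g0 j : ℕ) : ℚ) - 2 = b0q j := by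
    intro j
    fin_cases j <;>
      norm_num [g0, b0q, show ((4 : Fin 5) : ℕ) = 4 from rfl, show ((3 : Fin 5) : ℕ) = 3 from rfl,
        show ((2 : Fin 5) : ℕ) = 2 from rfl, show ((1 : Fin 5) : ℕ) = 1 from rfl,
        show ((0 : Fin 5) : ℕ) = 0 from rfl]
  rw [hn i, hni]
  push_cast
  exact_mod_cast hg (σ i)

section WithPerm

variable (b : Fin 5 → ℚ) (σ : Equiv.Perm (Fin 5))

lemma beta_comp (hσ : ∀ i, b i = b0q (σ i)) :
    (fun i => ((5 : ℚ)⁻¹ • b) (σ⁻¹ i)) = beta0 := by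
  funext i
  have h1 : b (σ⁻¹ i) = b0q (σ (σ⁻¹ i)) := hσ _
  have h2 : σ (σ⁻¹ i) = i := σ.apply_symm_apply i
  rw [Pi.smul_apply, h1, h2, smul_eq_mul]
  revert i
  intro i; fin_cases i <;> norm_num [b0q, beta0]

lemma Lb_to_A4 (hσ : ∀ i, b i = b0q (σ i)) :
    ∀ x ∈ (A4dual ⊔ AddSubgroup.zmultiples ((5 : ℚ)⁻¹ • b) : AddSubgroup (Fin 5 → ℚ)),
      Tfun (fun i => x (σ⁻¹ i)) ∈ A4 := by
  intro x hx
  have hle : (A4dual ⊔ AddSubgroup.zmultiples ((5 : ℚ)⁻¹ • b) : AddSubgroup (Fin 5 → ℚ))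
      ≤ AddSubgroup.comap (Thom.comp (Phom σ⁻¹)) A4 := by
    refine sup_le ?_ ?_
    · intro y hy
      exact Tdual _ (perm_dual σ⁻¹ y hy)
    · rw [AddSubgroup.zmultiples_le]
      show Tfun (fun i => ((5 : ℚ)⁻¹ • b) (σ⁻¹ i)) ∈ A4
      rw [beta_comp b σ hσ]
      exact Tbeta0
  exact hle hx

lemma Srho_mem (hσ : ∀ i, b i = b0q (σ i)) (ρ : Fin 5 → ℚ)
    (c1 c2 c3 c4 m : ℤ)
    (hrep : Sfun ρ = c1 • w1 + c2 • w2 + c3 • w3 + c4 • w4 + m • beta0) :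
    (fun i => Sfun ρ (σ i))
      ∈ (A4dual ⊔ AddSubgroup.zmultiples ((5 : ℚ)⁻¹ • b) : AddSubgroup (Fin 5 → ℚ)) := by
  have hbeta : ∀ i, beta0 (σ i) = ((5 : ℚ)⁻¹ • b) i := by
    intro i
    rw [Pi.smul_apply, hσ i, smul_eq_mul]
    generalize σ i = j
    fin_cases j <;> norm_num [b0q, beta0]
  have heq : (fun i => Sfun ρ (σ i))
      = (c1 • (fun i => w1 (σ i)) + c2 • (fun i => w2 (σ i)) + c3 • (fun i => w3 (σ i))
          + c4 • (fun i => w4 (σ i))) + m • ((5 : ℚ)⁻¹ • b) := by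
    funext i
    have h := congrFun hrep (σ i)
    simp only [Pi.add_apply, Pi.smul_apply] at h ⊢
    rw [h, hbeta i]
    rfl
  rw [heq]
  refine add_mem (AddSubgroup.mem_sup_left ?_) (AddSubgroup.mem_sup_right ?_)
  · exact add_mem (add_mem (add_mem (zsmul_mem (perm_dual σ _ hw1mem) _)
      (zsmul_mem (perm_dual σ _ hw2mem) _)) (zsmul_mem (perm_dual σ _ hw3mem) _))
      (zsmul_mem (perm_dual σ _ hw4mem) _)
  · exact zsmul_mem (AddSubgroup.mem_zmultiples _) _

lemma Srho1_rep : Sfun rho1 = (6 : ℤ) • w1 + (-5 : ℤ) • w2 + (4 : ℤ) • w3 + (-2 : ℤ) • w4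
    + (-8 : ℤ) • beta0 := by
  funext i; fin_cases i <;> (simp [Sfun, rho1, w1, w2, w3, w4, beta0, zsmul_eq_mul] <;> norm_num)

lemma Srho2_rep : Sfun rho2 = (5 : ℤ) • w1 + (-4 : ℤ) • w2 + (2 : ℤ) • w3 + (-1 : ℤ) • w4
    + (-6 : ℤ) • beta0 := by
  funext i; fin_cases i <;> (simp [Sfun, rho2, w1, w2, w3, w4, beta0, zsmul_eq_mul] <;> norm_num)

lemma Srho3_rep : Sfun rho3 = (6 : ℤ) • w1 + (-4 : ℤ) • w2 + (3 : ℤ) • w3 + (-2 : ℤ) • w4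
    + (-7 : ℤ) • beta0 := by
  funext i; fin_cases i <;> (simp [Sfun, rho3, w1, w2, w3, w4, beta0, zsmul_eq_mul] <;> norm_num)

lemma Srho4_rep : Sfun rho4 = (4 : ℤ) • w1 + (-3 : ℤ) • w2 + (2 : ℤ) • w3 + (-1 : ℤ) • w4
    + (-6 : ℤ) • beta0 := by
  funext i; fin_cases i <;> (simp [Sfun, rho4, w1, w2, w3, w4, beta0, zsmul_eq_mul] <;> norm_num)

lemma A4_to_Lb (hσ : ∀ i, b i = b0q (σ i)) :
    ∀ a ∈ A4, (fun i => Sfun a (σ i))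
      ∈ (A4dual ⊔ AddSubgroup.zmultiples ((5 : ℚ)⁻¹ • b) : AddSubgroup (Fin 5 → ℚ)) := by
  intro a ha
  have hle : A4 ≤ AddSubgroup.comap ((Phom σ).comp Shom)
      (A4dual ⊔ AddSubgroup.zmultiples ((5 : ℚ)⁻¹ • b) : AddSubgroup (Fin 5 → ℚ)) := by
    refine A4_le_roots _ ?_ ?_ ?_ ?_
    · exact Srho_mem b σ hσ rho1 6 (-5) 4 (-2) (-8) Srho1_rep
    · exact Srho_mem b σ hσ rho2 5 (-4) 2 (-1) (-6) Srho2_rep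
    · exact Srho_mem b σ hσ rho3 6 (-4) 3 (-2) (-7) Srho3_rep
    · exact Srho_mem b σ hσ rho4 4 (-3) 2 (-1) (-6) Srho4_rep
  exact hle ha

lemma Lb_sum (hb : b ∈ A4) :
    ∀ x ∈ (A4dual ⊔ AddSubgroup.zmultiples ((5 : ℚ)⁻¹ • b) : AddSubgroup (Fin 5 → ℚ)),
      ∑ i, x i = 0 := by
  intro x hx
  have hle : (A4dual ⊔ AddSubgroup.zmultiples ((5 : ℚ)⁻¹ • b) : AddSubgroup (Fin 5 → ℚ))
      ≤ V0.toAddSubgroup := by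
    refine sup_le ?_ ?_
    · intro y hy; exact dual_sum_zero y hy
    · rw [AddSubgroup.zmultiples_le]
      show ∑ i, ((5 : ℚ)⁻¹ • b) i = 0
      simp only [Pi.smul_apply, smul_eq_mul, ← Finset.mul_sum]
      rw [hb.2, mul_zero]
  exact hle hx

end WithPerm

/-- For any vector `β = b/5` of norm `2` in the dual lattice of
`A₄^∨(5)` (i.e. `b ∈ A₄` with `⟨b,b⟩ = 10`), the lattice `A₄^∨(5) + ℤβ` is isomorphic
to the root lattice `A₄`: there is a group isomorphism `φ` onto `A₄` with
`⟨φ(x),φ(y)⟩ = 5⟨x,y⟩`. -/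
theorem A4dual5_plus_beta_iso_A4 :
    ∀ b : Fin 5 → ℚ, b ∈ A4 → form b b = 10 →
      ∃ φ : (A4dual ⊔ AddSubgroup.zmultiples ((5 : ℚ)⁻¹ • b) : AddSubgroup (Fin 5 → ℚ)) ≃+ A4,
        ∀ x y : (A4dual ⊔ AddSubgroup.zmultiples ((5 : ℚ)⁻¹ • b) : AddSubgroup (Fin 5 → ℚ)),
          form (φ x : Fin 5 → ℚ) (φ y : Fin 5 → ℚ)
            = 5 * form (x : Fin 5 → ℚ) (y : Fin 5 → ℚ) := by
  intro b hb hf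
  obtain ⟨σ, hσ⟩ := classify b hb hf
  have memT : ∀ x ∈ (A4dual ⊔ AddSubgroup.zmultiples ((5 : ℚ)⁻¹ • b) :
      AddSubgroup (Fin 5 → ℚ)), Tfun (fun i => x (σ⁻¹ i)) ∈ A4 := Lb_to_A4 b σ hσ
  have memS : ∀ a ∈ A4, (fun i => Sfun a (σ i))
      ∈ (A4dual ⊔ AddSubgroup.zmultiples ((5 : ℚ)⁻¹ • b) : AddSubgroup (Fin 5 → ℚ)) :=
    A4_to_Lb b σ hσ
  have hsum : ∀ x ∈ (A4dual ⊔ AddSubgroup.zmultiples ((5 : ℚ)⁻¹ • b) :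
      AddSubgroup (Fin 5 → ℚ)), ∑ i, x i = 0 := Lb_sum b hb
  refine ⟨{ toFun := fun x => ⟨Tfun (fun i => (x : Fin 5 → ℚ) (σ⁻¹ i)), memT _ x.2⟩
          , invFun := fun a => ⟨fun i => Sfun (a : Fin 5 → ℚ) (σ i), memS _ a.2⟩
          , left_inv := ?_, right_inv := ?_, map_add' := ?_ }, ?_⟩
  · intro x
    apply Subtype.ext
    show (fun i => Sfun (Tfun fun i => (x : Fin 5 → ℚ) (σ⁻¹ i)) (σ i)) = (x : Fin 5 → ℚ)
    have hs : ∑ i, (x : Fin 5 → ℚ) (σ⁻¹ i) = 0 := by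
      rw [Equiv.sum_comp σ⁻¹ (x : Fin 5 → ℚ)]; exact hsum _ x.2
    rw [ST_id _ hs]
    funext i; simp
  · intro a
    apply Subtype.ext
    show Tfun (fun i => (fun j => Sfun (a : Fin 5 → ℚ) (σ j)) (σ⁻¹ i)) = (a : Fin 5 → ℚ)
    have h1 : (fun i => (fun j => Sfun (a : Fin 5 → ℚ) (σ j)) (σ⁻¹ i))
        = Sfun (a : Fin 5 → ℚ) := by
      funext i; simp
    rw [h1, TS_id]
    rw [Fin.sum_univ_five]
    have := a.2.2
    rw [Fin.sum_univ_five] at this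
    exact this
  · intro x y
    apply Subtype.ext
    show Tfun (fun i => ((x : Fin 5 → ℚ) + (y : Fin 5 → ℚ)) (σ⁻¹ i))
        = Tfun (fun i => (x : Fin 5 → ℚ) (σ⁻¹ i)) + Tfun (fun i => (y : Fin 5 → ℚ) (σ⁻¹ i))
    have h1 : (fun i => ((x : Fin 5 → ℚ) + (y : Fin 5 → ℚ)) (σ⁻¹ i))
        = (fun i => (x : Fin 5 → ℚ) (σ⁻¹ i)) + (fun i => (y : Fin 5 → ℚ) (σ⁻¹ i)) := rfl
    rw [h1]
    exact Thom.map_add _ _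
  · intro x y
    show form (Tfun fun i => (x : Fin 5 → ℚ) (σ⁻¹ i)) (Tfun fun i => (y : Fin 5 → ℚ) (σ⁻¹ i))
        = 5 * form (x : Fin 5 → ℚ) (y : Fin 5 → ℚ)
    rw [form_T]
    have hx : ∑ i, (x : Fin 5 → ℚ) (σ⁻¹ i) = 0 := by
      rw [Equiv.sum_comp σ⁻¹ (x : Fin 5 → ℚ)]; exact hsum _ x.2
    have hy : ∑ i, (y : Fin 5 → ℚ) (σ⁻¹ i) = 0 := by
      rw [Equiv.sum_comp σ⁻¹ (y : Fin 5 → ℚ)]; exact hsum _ y.2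
    have hform : form (fun i => (x : Fin 5 → ℚ) (σ⁻¹ i)) (fun i => (y : Fin 5 → ℚ) (σ⁻¹ i))
        = form (x : Fin 5 → ℚ) (y : Fin 5 → ℚ) := by
      unfold form
      exact Equiv.sum_comp σ⁻¹ (fun j => (x : Fin 5 → ℚ) j * (y : Fin 5 → ℚ) j)
    rw [hx, hy, hform]
    ring
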